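/- arXiv:2509.00871 — 2 statements merged into one kernel-verified Lean document; each statement's English description precedes it below -/
import Mathlib

section
/- A point p of the affine plane 𝔸 = {(x,y,z) ∈ V : x + y + z = 1} is an accumulation point of the set of rescaled positive roots {β̂ : β ∈ Φ⁺} if and only if Q(p) = 0. -/
open scoped NNReal

noncomputable section

/-- The ambient vector space `V = ℝ³`. -/
abbrev V : Type := Fin 3 → ℝ

/-- The symmetric bilinear form with `⟨αᵢ,αⱼ⟩ = 1` if `i = j` and `-1` otherwise. -/
def B (x y : V) : ℝ := 2 * (∑ i, x i * y i) - (∑ i, x i) * (∑ i, y i)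

/-- The associated quadratic form. -/
def Q (x : V) : ℝ := B x x

/-- The simple roots `α₁, α₂, α₃` (the standard basis vectors). -/
def α (i : Fin 3) : V := Pi.single i 1

/-- The set of simple roots. -/
def Δ : Set V := Set.range α

/-- `f` is the reflection `r_{αᵢ} : x ↦ x - 2⟨αᵢ,x⟩αᵢ` for some `i` (note `⟨αᵢ,αᵢ⟩ = 1`). -/
def IsSimpleReflection (f : V ≃ₗ[ℝ] V) : Prop :=
  ∃ i : Fin 3, ∀ x : V, f x = x - (2 * B (α i) x) • α i

/-- The group `W ≤ GL(V)` generated by the three simple reflections: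
the standard reflection representation of `U₃`. -/
def W : Subgroup (V ≃ₗ[ℝ] V) := Subgroup.closure {f | IsSimpleReflection f}

/-- The root system `Φ = {w·αᵢ : w ∈ W, i ∈ {1,2,3}}`. -/
def Φ : Set V := {x | ∃ w ∈ W, ∃ i : Fin 3, x = w (α i)}

/-- `Span_{≥0}(X)`: the set of nonnegative linear combinations of elements of `X`. -/
def nnspan (X : Set V) : Set V := (Submodule.span ℝ≥0 X : Set V)

/-- The positive roots `Φ⁺ = Φ ∩ Span_{≥0}(Δ)`. -/
def Φpos : Set V := Φ ∩ nnspan Δ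

-- basics
lemma B_eq (x y : V) : B x y = 2*(x 0*y 0 + x 1*y 1 + x 2*y 2) - (x 0+x 1+x 2)*(y 0+y 1+y 2) := by
  simp [B, Fin.sum_univ_three]

lemma Q_eq (x : V) : Q x = 2*(x 0*x 0 + x 1*x 1 + x 2*x 2) - (x 0+x 1+x 2)*(x 0+x 1+x 2) := by
  simp [Q, B_eq]

lemma B_alpha (i : Fin 3) (x : V) : B (α i) x = 2 * x i - (x 0 + x 1 + x 2) := by
  fin_cases i <;> simp [B_eq, α, Pi.single_apply] <;> ring

lemma Q_alpha (i : Fin 3) : Q (α i) = 1 := by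
  fin_cases i <;> simp [Q_eq, α, Pi.single_apply] <;> norm_num

lemma Q_smul (t : ℝ) (x : V) : Q (t • x) = t^2 * Q x := by
  simp [Q_eq, Pi.smul_apply, smul_eq_mul]; ring

lemma Q_smul_add (s : ℝ) (u v : V) : Q (s • u + v) = s^2 * Q u + 2*s*(B u v) + Q v := by
  simp [Q_eq, B_eq, Pi.smul_apply, smul_eq_mul]; ring

-- reflection as explicit function
def reflFun (i : Fin 3) (x : V) : V := x - (2 * B (α i) x) • α i

lemma reflFun_invol (i : Fin 3) : Function.Involutive (reflFun i) := by
  intro x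
  funext j
  fin_cases i <;> fin_cases j <;>
    simp [reflFun, B_eq, α, Pi.single_apply, Pi.smul_apply, smul_eq_mul] <;> ring

lemma Q_reflFun (i : Fin 3) (x : V) : Q (reflFun i x) = Q x := by
  fin_cases i <;> simp [reflFun, Q_eq, B_eq, α, Pi.single_apply, Pi.smul_apply, smul_eq_mul] <;> ring

def reflLM (i : Fin 3) : V →ₗ[ℝ] V where
  toFun := reflFun i
  map_add' x y := by
    funext j
    fin_cases i <;> fin_cases j <;>
      simp [reflFun, B_eq, α, Pi.single_apply, Pi.smul_apply, smul_eq_mul] <;> ring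
  map_smul' c x := by
    funext j
    fin_cases i <;> fin_cases j <;>
      simp [reflFun, B_eq, α, Pi.single_apply, Pi.smul_apply, smul_eq_mul] <;> ring

def refl3 (i : Fin 3) : V ≃ₗ[ℝ] V := LinearEquiv.ofInvolutive (reflLM i) (reflFun_invol i)

lemma refl3_apply (i : Fin 3) (x : V) : refl3 i x = reflFun i x := rfl

lemma refl3_mem : ∀ i, refl3 i ∈ W := fun i =>
  Subgroup.subset_closure ⟨i, fun x => rfl⟩

-- W preserves Q and the integer lattice
def IntVec (x : V) : Prop := ∀ i, ∃ k : ℤ, x i = (k : ℝ)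

lemma alpha_apply (i j : Fin 3) : α i j = if j = i then 1 else 0 := by
  simp [α, Pi.single_apply]

lemma IntVec_reflFun {x : V} (hx : IntVec x) (i : Fin 3) : IntVec (reflFun i x) := by
  obtain ⟨k0, h0⟩ := hx 0; obtain ⟨k1, h1⟩ := hx 1; obtain ⟨k2, h2⟩ := hx 2
  obtain ⟨ki, hki⟩ := hx i
  have hB : B (α i) x = ((2*ki - (k0+k1+k2) : ℤ) : ℝ) := by
    rw [B_alpha, h0, h1, h2, hki]; push_cast; ring
  intro j
  obtain ⟨kj, hkj⟩ := hx j
  refine ⟨kj - 2*(2*ki - (k0+k1+k2)) * (if j = i then 1 else 0), ?_⟩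
  have hc : reflFun i x j = x j - (2 * B (α i) x) * α i j := rfl
  rw [hc, hB, alpha_apply, hkj]
  split_ifs <;> push_cast <;> ring

lemma W_pres : ∀ w ∈ W, (∀ x, Q (w x) = Q x) ∧ (∀ x, IntVec x → IntVec (w x))
    ∧ (∀ x, IntVec x → IntVec (w.symm x)) := by
  intro w hw
  induction hw using Subgroup.closure_induction with
  | mem f hf =>
    obtain ⟨i, hi⟩ := hf
    have hfe : ∀ x, f x = reflFun i x := fun x => hi x
    have hsymm : ∀ x, f.symm x = reflFun i x := by
      intro x
      have h1 : f (reflFun i x) = x := (hfe _).trans (reflFun_invol i x)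
      exact f.injective (by rw [LinearEquiv.apply_symm_apply, h1])
    exact ⟨fun x => by rw [hfe]; exact Q_reflFun i x,
      fun x hx => by rw [hfe]; exact IntVec_reflFun hx i,
      fun x hx => by rw [hsymm]; exact IntVec_reflFun hx i⟩
  | one => exact ⟨fun x => rfl, fun x hx => hx, fun x hx => hx⟩
  | mul a b _ _ ha hb =>
    refine ⟨fun x => ?_, fun x hx => ?_, fun x hx => ?_⟩
    · exact (ha.1 (b x)).trans (hb.1 x)
    · exact ha.2.1 _ (hb.2.1 x hx)
    · exact hb.2.2 _ (ha.2.2 x hx)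
  | inv a _ ha =>
    refine ⟨fun x => ?_, fun x hx => ha.2.2 x hx, fun x hx => ha.2.1 x hx⟩
    have h1 := ha.1 (a.symm x)
    rw [LinearEquiv.apply_symm_apply] at h1
    exact h1.symm

lemma IntVec_alpha (i : Fin 3) : IntVec (α i) := by
  intro j
  refine ⟨if j = i then 1 else 0, ?_⟩
  rw [alpha_apply]; split_ifs <;> norm_num

-- nnspan Δ = nonnegative orthant
lemma mem_nnspanΔ (x : V) : x ∈ nnspan Δ ↔ ∀ i, 0 ≤ x i := by
  constructor
  · intro hx
    have key : ∀ y ∈ Submodule.span ℝ≥0 Δ, ∀ i, 0 ≤ y i := by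
      intro y hy
      induction hy using Submodule.span_induction with
      | mem z hz =>
        obtain ⟨i, rfl⟩ := hz
        intro j; rw [alpha_apply]; split_ifs <;> norm_num
      | zero => intro j; simp
      | add u v _ _ hu hv => intro j; simpa using add_nonneg (hu j) (hv j)
      | smul c u _ hu =>
        intro j
        have hc : (c • u) j = (c : ℝ) * u j := rfl
        rw [hc]
        exact mul_nonneg c.2 (hu j)
    exact key x hx
  · intro hx
    have hx' : x = (⟨x 0, hx 0⟩ : ℝ≥0) • α 0 + (⟨x 1, hx 1⟩ : ℝ≥0) • α 1
        + (⟨x 2, hx 2⟩ : ℝ≥0) • α 2 := by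
      funext j
      have h0 : ((⟨x 0, hx 0⟩ : ℝ≥0) • α 0) j = x 0 * α 0 j := rfl
      have h1 : ((⟨x 1, hx 1⟩ : ℝ≥0) • α 1) j = x 1 * α 1 j := rfl
      have h2 : ((⟨x 2, hx 2⟩ : ℝ≥0) • α 2) j = x 2 * α 2 j := rfl
      have hj : x j = (fun u => u j) ((⟨x 0, hx 0⟩ : ℝ≥0) • α 0 + (⟨x 1, hx 1⟩ : ℝ≥0) • α 1
        + (⟨x 2, hx 2⟩ : ℝ≥0) • α 2) := by
        show x j = _ + _
        show x j = ((_ + _) : V) j + _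
        rw [Pi.add_apply, h0, h1, h2, alpha_apply, alpha_apply, alpha_apply]
        fin_cases j <;> norm_num [Fin.ext_iff] <;> try rfl
      exact hj
    rw [nnspan, SetLike.mem_coe] at *
    rw [hx']
    have hm : ∀ i, α i ∈ Submodule.span ℝ≥0 Δ := fun i =>
      Submodule.subset_span ⟨i, rfl⟩
    exact Submodule.add_mem _ (Submodule.add_mem _
      (Submodule.smul_mem _ _ (hm 0)) (Submodule.smul_mem _ _ (hm 1)))
      (Submodule.smul_mem _ _ (hm 2))

-- characterization of positive roots
def ofNat3 (k : Fin 3 → ℕ) : V := fun i => (k i : ℝ)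

lemma Q_ofNat3 (k : Fin 3 → ℕ) :
    Q (ofNat3 k) = ((2*((k 0:ℤ)^2+(k 1:ℤ)^2+(k 2:ℤ)^2) - ((k 0:ℤ)+(k 1:ℤ)+(k 2:ℤ))^2 : ℤ) : ℝ) := by
  rw [Q_eq]; simp only [ofNat3]; push_cast; ring

lemma alpha_mem_phipos (i : Fin 3) : α i ∈ Φpos := by
  refine ⟨⟨1, Subgroup.one_mem _, i, rfl⟩, (mem_nnspanΔ _).2 (fun j => ?_)⟩
  rw [alpha_apply]; split_ifs <;> norm_num

lemma natvec_mem_phipos : ∀ n (k : Fin 3 → ℕ), k 0 + k 1 + k 2 = n →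
    Q (ofNat3 k) = 1 → ofNat3 k ∈ Φpos := by
  intro n
  induction n using Nat.strong_induction_on with
  | _ n IH =>
    intro k hsum hQ
    have hN : ((k 0:ℤ)+(k 1:ℤ)+(k 2:ℤ)) = (n : ℤ) := by exact_mod_cast hsum
    have hQz : 2*((k 0:ℤ)^2+(k 1:ℤ)^2+(k 2:ℤ)^2) = ((n:ℤ))^2 + 1 := by
      rw [Q_ofNat3] at hQ
      have h1 : (2*((k 0:ℤ)^2+(k 1:ℤ)^2+(k 2:ℤ)^2) - ((k 0:ℤ)+(k 1:ℤ)+(k 2:ℤ))^2 : ℤ) = 1 := by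
        exact_mod_cast hQ
      rw [hN] at h1; linarith
    rcases Nat.lt_or_ge n 2 with h2 | h2
    · interval_cases n
      · exfalso
        have h0 : k 0 = 0 ∧ k 1 = 0 ∧ k 2 = 0 := by omega
        rw [h0.1, h0.2.1, h0.2.2] at hQz; norm_num at hQz
      · have hc : (k 0 = 1 ∧ k 1 = 0 ∧ k 2 = 0) ∨ (k 0 = 0 ∧ k 1 = 1 ∧ k 2 = 0)
            ∨ (k 0 = 0 ∧ k 1 = 0 ∧ k 2 = 1) := by omega
        rcases hc with ⟨ha, hb, hcc⟩ | ⟨ha, hb, hcc⟩ | ⟨ha, hb, hcc⟩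
        · have : ofNat3 k = α 0 := by
            funext j; fin_cases j <;>
              simp [ofNat3, alpha_apply, ha, hb, hcc] <;> rfl
          rw [this]; exact alpha_mem_phipos 0
        · have : ofNat3 k = α 1 := by
            funext j; fin_cases j <;>
              simp [ofNat3, alpha_apply, ha, hb, hcc] <;> rfl
          rw [this]; exact alpha_mem_phipos 1
        · have : ofNat3 k = α 2 := by
            funext j; fin_cases j <;>
              simp [ofNat3, alpha_apply, ha, hb, hcc] <;> rfl
          rw [this]; exact alpha_mem_phipos 2
    · -- find a coordinate with 2 * k i > n
      have hex : ∃ i : Fin 3, n < 2 * k i := by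
        by_contra hno
        push_neg at hno
        have h0 := hno 0; have h1 := hno 1; have h01 := hno 2
        have hz0 : 2*(k 0:ℤ) ≤ n := by exact_mod_cast h0
        have hz1 : 2*(k 1:ℤ) ≤ n := by exact_mod_cast h1
        have hz2 : 2*(k 2:ℤ) ≤ n := by exact_mod_cast h01
        have hp0 : (0:ℤ) ≤ (k 0:ℤ) := Int.natCast_nonneg _
        have hp1 : (0:ℤ) ≤ (k 1:ℤ) := Int.natCast_nonneg _
        have hp2 : (0:ℤ) ≤ (k 2:ℤ) := Int.natCast_nonneg _
        nlinarith [mul_nonneg hp0 (sub_nonneg.2 hz0), mul_nonneg hp1 (sub_nonneg.2 hz1),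
          mul_nonneg hp2 (sub_nonneg.2 hz2)]
      obtain ⟨i, hi⟩ := hex
      have h3 : 3 * k i ≤ 2 * n := by
        by_contra hcon
        push_neg at hcon
        have h2z : (2:ℤ) ≤ (n:ℤ) := by exact_mod_cast h2
        fin_cases i
        · have hiz : (n:ℤ) < 2*(k 0:ℤ) := by exact_mod_cast hi
          have hcz : 2*(n:ℤ) < 3*(k 0:ℤ) := by exact_mod_cast hcon
          nlinarith [sq_nonneg ((k 1:ℤ) - (k 2:ℤ)), Int.natCast_nonneg (k 0),
            Int.natCast_nonneg (k 1), Int.natCast_nonneg (k 2),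
            mul_nonneg (Int.natCast_nonneg (k 0)) (by linarith : (0:ℤ) ≤ 3*(k 0:ℤ) - 2*(n:ℤ) - 1)]
        · have hiz : (n:ℤ) < 2*(k 1:ℤ) := by exact_mod_cast hi
          have hcz : 2*(n:ℤ) < 3*(k 1:ℤ) := by exact_mod_cast hcon
          nlinarith [sq_nonneg ((k 0:ℤ) - (k 2:ℤ)), Int.natCast_nonneg (k 0),
            Int.natCast_nonneg (k 1), Int.natCast_nonneg (k 2),
            mul_nonneg (Int.natCast_nonneg (k 1)) (by linarith : (0:ℤ) ≤ 3*(k 1:ℤ) - 2*(n:ℤ) - 1)]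
        · have hiz : (n:ℤ) < 2*(k 2:ℤ) := by exact_mod_cast hi
          have hcz : 2*(n:ℤ) < 3*(k 2:ℤ) := by exact_mod_cast hcon
          nlinarith [sq_nonneg ((k 0:ℤ) - (k 1:ℤ)), Int.natCast_nonneg (k 0),
            Int.natCast_nonneg (k 1), Int.natCast_nonneg (k 2),
            mul_nonneg (Int.natCast_nonneg (k 2)) (by linarith : (0:ℤ) ≤ 3*(k 2:ℤ) - 2*(n:ℤ) - 1)]
      -- the reflected vector
      set k' : Fin 3 → ℕ := Function.update k i (2*n - 3*k i) with hk'
      have hki_le : k i ≤ n := by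
        have : i = 0 ∨ i = 1 ∨ i = 2 := by fin_cases i <;> simp
        rcases this with rfl | rfl | rfl <;> omega
      have hrefl : reflFun i (ofNat3 k) = ofNat3 k' := by
        funext j
        have hc : reflFun i (ofNat3 k) j = ofNat3 k j - (2 * B (α i) (ofNat3 k)) * α i j := rfl
        rw [hc, B_alpha, alpha_apply]
        have hsum' : ofNat3 k 0 + ofNat3 k 1 + ofNat3 k 2 = (n : ℝ) := by
          simp only [ofNat3]; exact_mod_cast congrArg (Nat.cast : ℕ → ℝ) hsum
        rw [hsum']
        by_cases hj : j = i
        · subst hj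
          have hcast : ((2*n - 3*k j : ℕ) : ℝ) = 2*(n:ℝ) - 3*(k j : ℝ) := by
            rw [Nat.cast_sub h3]; push_cast; ring
          simp only [Function.update_apply, hk', ofNat3, if_true, eq_self_iff_true, ite_true,
            if_pos rfl, hcast]
          ring
        · simp only [Function.update_apply, hk', if_neg hj, ofNat3]; ring
      have hicase : i = 0 ∨ i = 1 ∨ i = 2 := by fin_cases i <;> simp
      have hn' : k' 0 + k' 1 + k' 2 < n := by
        rcases hicase with rfl | rfl | rfl
        · have e0 : k' 0 = 2*n - 3*k 0 := by simp [hk']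
          have e1 : k' 1 = k 1 := by simp [hk', Function.update_apply]
          have e2 : k' 2 = k 2 := by simp [hk', Function.update_apply]
          rw [e0, e1, e2]; omega
        · have e0 : k' 0 = k 0 := by simp [hk', Function.update_apply]
          have e1 : k' 1 = 2*n - 3*k 1 := by simp [hk']
          have e2 : k' 2 = k 2 := by simp [hk', Function.update_apply]
          rw [e0, e1, e2]; omega
        · have e0 : k' 0 = k 0 := by simp [hk', Function.update_apply]
          have e1 : k' 1 = k 1 := by simp [hk', Function.update_apply]
          have e2 : k' 2 = 2*n - 3*k 2 := by simp [hk']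
          rw [e0, e1, e2]; omega
      have hQ' : Q (ofNat3 k') = 1 := by rw [← hrefl, Q_reflFun]; exact hQ
      have hmem' := IH _ hn' k' rfl hQ'
      obtain ⟨⟨w, hw, jj, hww⟩, -⟩ := hmem'
      refine ⟨⟨refl3 i * w, mul_mem (refl3_mem i) hw, jj, ?_⟩,
        (mem_nnspanΔ _).2 (fun j => Nat.cast_nonneg _)⟩
      have hmul : (refl3 i * w) (α jj) = refl3 i (w (α jj)) := rfl
      rw [hmul, ← hww, refl3_apply, ← hrefl]
      exact (reflFun_invol i (ofNat3 k)).symm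

lemma mem_phipos_iff (x : V) :
    x ∈ Φpos ↔ (∃ k : Fin 3 → ℕ, x = ofNat3 k) ∧ Q x = 1 := by
  constructor
  · rintro ⟨⟨w, hw, i, rfl⟩, hspan⟩
    have hQ : Q (w (α i)) = 1 := by rw [(W_pres w hw).1]; exact Q_alpha i
    have hint : IntVec (w (α i)) := (W_pres w hw).2.1 _ (IntVec_alpha i)
    have hnn := (mem_nnspanΔ _).1 hspan
    refine ⟨⟨fun j => ((hint j).choose).toNat, ?_⟩, hQ⟩
    funext j
    have hj := (hint j).choose_spec
    have h0 : (0:ℝ) ≤ ((hint j).choose : ℝ) := by rw [← hj]; exact hnn j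
    have h0' : (0:ℤ) ≤ (hint j).choose := by exact_mod_cast h0
    simp only [ofNat3]
    exact hj.trans
      (by exact_mod_cast congrArg (Int.cast : ℤ → ℝ) (Int.toNat_of_nonneg h0').symm)
  · rintro ⟨⟨k, rfl⟩, hQ⟩
    exact natvec_mem_phipos (k 0 + k 1 + k 2) k rfl hQ

-- the set of rescaled positive roots
def S : Set V := {x : V | ∃ β ∈ Φpos, x = (∑ i, β i)⁻¹ • β}

lemma S_spec {x : V} (hx : x ∈ S) : ∃ k : Fin 3 → ℕ, 1 ≤ k 0 + k 1 + k 2 ∧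
    Q (ofNat3 k) = 1 ∧ x = (((k 0 + k 1 + k 2 : ℕ) : ℝ))⁻¹ • ofNat3 k := by
  obtain ⟨β, hβ, hxe⟩ := hx
  obtain ⟨⟨k, rfl⟩, hQ⟩ := (mem_phipos_iff β).1 hβ
  have hsum : (∑ i, ofNat3 k i) = ((k 0 + k 1 + k 2 : ℕ) : ℝ) := by
    rw [Fin.sum_univ_three]; simp only [ofNat3]; push_cast; ring
  refine ⟨k, ?_, hQ, by rw [hxe, hsum]⟩
  by_contra hn
  have h0 : k 0 = 0 ∧ k 1 = 0 ∧ k 2 = 0 := by omega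
  rw [Q_ofNat3, h0.1, h0.2.1, h0.2.2] at hQ
  norm_num at hQ

lemma Q_of_S {x : V} (hx : x ∈ S) : ∃ n : ℕ, 1 ≤ n ∧ Q x = (((n:ℝ))^2)⁻¹ := by
  obtain ⟨k, hk1, hQ, rfl⟩ := S_spec hx
  refine ⟨k 0 + k 1 + k 2, hk1, ?_⟩
  rw [Q_smul, hQ, mul_one, ← inv_pow]

lemma Q_pos_of_S {x : V} (hx : x ∈ S) : 0 < Q x := by
  obtain ⟨n, hn, hQ⟩ := Q_of_S hx
  rw [hQ]
  have : (0:ℝ) < (n:ℝ) := by exact_mod_cast hn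
  positivity

lemma contQ : Continuous Q := by
  have h : Q = fun x : V => 2*(x 0*x 0 + x 1*x 1 + x 2*x 2) - (x 0+x 1+x 2)*(x 0+x 1+x 2) := by
    funext x; exact Q_eq x
  rw [h]
  fun_prop

lemma finite_lowheight (N : ℕ) :
    Set.Finite {x : V | ∃ k : Fin 3 → ℕ, (k 0 + k 1 + k 2 ≤ N) ∧
      x = (((k 0 + k 1 + k 2 : ℕ) : ℝ))⁻¹ • ofNat3 k} := by
  classical
  have : {x : V | ∃ k : Fin 3 → ℕ, (k 0 + k 1 + k 2 ≤ N) ∧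
      x = (((k 0 + k 1 + k 2 : ℕ) : ℝ))⁻¹ • ofNat3 k} ⊆
      Set.range (fun f : Fin 3 → Fin (N+1) =>
        ((((f 0 : ℕ) + (f 1 : ℕ) + (f 2 : ℕ) : ℕ) : ℝ))⁻¹ • ofNat3 (fun i => (f i : ℕ))) := by
    rintro x ⟨k, hkN, rfl⟩
    have hb : ∀ i, k i < N + 1 := by
      intro i
      have : i = 0 ∨ i = 1 ∨ i = 2 := by fin_cases i <;> simp
      rcases this with rfl | rfl | rfl <;> omega
    refine ⟨fun i => ⟨k i, hb i⟩, ?_⟩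
    simp
  exact Set.Finite.subset (Set.finite_range _) this

theorem acc_imp_isotropic (p : V) (hacc : AccPt p (Filter.principal S)) : Q p = 0 := by
  by_contra hQ0
  rcases lt_or_gt_of_ne hQ0 with hneg | hpos
  · -- Q p < 0 : an open neighborhood avoids S entirely
    rw [accPt_iff_nhds] at hacc
    obtain ⟨y, ⟨hyU, hyS⟩, -⟩ := hacc (Q ⁻¹' (Set.Iio 0))
      ((contQ.isOpen_preimage _ isOpen_Iio).mem_nhds hneg)
    exact absurd (Q_pos_of_S hyS) (not_lt.2 (le_of_lt hyU))
  · -- Q p > 0 : only finitely many rescaled roots have Q above Q p / 2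
    set N : ℕ := ⌈(2 : ℝ) / Q p⌉₊ with hN
    set T : Set V := {x : V | ∃ k : Fin 3 → ℕ, (k 0 + k 1 + k 2 ≤ N) ∧
      x = (((k 0 + k 1 + k 2 : ℕ) : ℝ))⁻¹ • ofNat3 k} with hT
    have hTfin : Set.Finite (T \ {p}) := (finite_lowheight N).diff
    have hUopen : IsOpen ((Q ⁻¹' (Set.Ioi (Q p / 2))) ∩ (T \ {p})ᶜ) :=
      (contQ.isOpen_preimage _ isOpen_Ioi).inter hTfin.isClosed.isOpen_compl
    have hpU : p ∈ (Q ⁻¹' (Set.Ioi (Q p / 2))) ∩ (T \ {p})ᶜ := by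
      constructor
      · simp only [Set.mem_preimage, Set.mem_Ioi]; linarith
      · intro hmem; exact hmem.2 rfl
    rw [accPt_iff_nhds] at hacc
    obtain ⟨y, ⟨⟨hyQ, hyT⟩, hyS⟩, hyp⟩ := hacc _ (hUopen.mem_nhds hpU)
    obtain ⟨k, hk1, hkQ, hke⟩ := S_spec hyS
    set n : ℕ := k 0 + k 1 + k 2 with hn
    have hQy : Q y = (((n:ℝ))^2)⁻¹ := by rw [hke, Q_smul, hkQ, mul_one, ← inv_pow]
    have hnpos : (0:ℝ) < (n:ℝ) := by exact_mod_cast hk1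
    have hy2 : Q p / 2 < (((n:ℝ))^2)⁻¹ := by
      rw [← hQy]; exact hyQ
    have hn2 : ((n:ℝ))^2 < 2 / Q p := by
      rw [lt_div_iff₀ hpos]
      have h1 : Q p / 2 * ((n:ℝ))^2 < 1 := by
        have := mul_lt_mul_of_pos_right hy2 (by positivity : (0:ℝ) < ((n:ℝ))^2)
        rwa [inv_mul_cancel₀ (by positivity)] at this
      linarith
    have hnN : n ≤ N := by
      have h1n : (1:ℝ) ≤ (n:ℝ) := by exact_mod_cast hk1
      have hle : ((n:ℝ)) ≤ ((n:ℝ))^2 := by nlinarith [h1n]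
      have : ((n:ℝ)) < 2 / Q p := lt_of_le_of_lt hle hn2
      have h2 : ((n:ℝ)) ≤ (N:ℝ) := le_trans (le_of_lt this) (Nat.le_ceil _)
      exact_mod_cast h2
    exact hyT ⟨⟨k, by rw [← hn]; exact ⟨hnN, hke⟩⟩, hyp⟩

open Filter Topology

-- limit of rescaled affine-linear integer sequences
lemma aux_tendsto (Hr hr cr dr : ℝ) (hH : 0 < Hr) :
    Tendsto (fun m : ℕ => ((m:ℝ)*Hr + hr)⁻¹ * ((m:ℝ)*cr + dr)) atTop (𝓝 (Hr⁻¹ * cr)) := by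
  have hb : Tendsto (fun m : ℕ => 1/(m:ℝ)) atTop (𝓝 0) := tendsto_one_div_atTop_nhds_zero_nat
  have h1 : Tendsto (fun m : ℕ => (Hr + hr * (1/(m:ℝ)))⁻¹ * (cr + dr * (1/(m:ℝ)))) atTop
      (𝓝 (Hr⁻¹ * cr)) := by
    have t1 : Tendsto (fun m : ℕ => Hr + hr * (1/(m:ℝ))) atTop (𝓝 (Hr + hr * 0)) :=
      tendsto_const_nhds.add (tendsto_const_nhds.mul hb)
    have t2 : Tendsto (fun m : ℕ => cr + dr * (1/(m:ℝ))) atTop (𝓝 (cr + dr * 0)) :=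
      tendsto_const_nhds.add (tendsto_const_nhds.mul hb)
    have t3 := (t1.inv₀ (by simpa using hH.ne')).mul t2
    simpa using t3
  apply h1.congr'
  filter_upwards [eventually_gt_atTop (⌈|hr|/Hr⌉₊)] with m hm
  have hm1 : (0:ℝ) < (m:ℝ) := by
    have : 0 < m := by omega
    exact_mod_cast this
  have hmr : |hr|/Hr < (m:ℝ) := lt_of_le_of_lt (Nat.le_ceil _) (by exact_mod_cast hm)
  have habs : |hr| < (m:ℝ) * Hr := by
    rw [div_lt_iff₀ hH] at hmr; linarith
  have hden : (0:ℝ) < (m:ℝ)*Hr + hr := by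
    have := neg_abs_le hr; linarith
  have e1 : Hr + hr * (1/(m:ℝ)) = ((m:ℝ)*Hr + hr)/(m:ℝ) := by field_simp
  have e2 : cr + dr * (1/(m:ℝ)) = ((m:ℝ)*cr + dr)/(m:ℝ) := by field_simp
  rw [e1, e2]
  field_simp

lemma family_mem_closure (c d : Fin 3 → ℤ)
    (hC : Q (fun i => ((c i : ℝ))) = 0)
    (hB : B (fun i => ((c i : ℝ))) (fun i => ((d i : ℝ))) = 0)
    (hD : Q (fun i => ((d i : ℝ))) = 1)
    (hpos : ∀ i, 1 ≤ c i ∨ (c i = 0 ∧ 0 ≤ d i))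
    (hH1 : 1 ≤ c 0 + c 1 + c 2) :
    (((c 0 + c 1 + c 2 : ℤ) : ℝ))⁻¹ • (fun i => ((c i : ℝ)) : V) ∈ closure S := by
  classical
  set H : ℤ := c 0 + c 1 + c 2 with hHdef
  set h : ℤ := d 0 + d 1 + d 2 with hhdef
  set m₀ : ℕ := (d 0).natAbs + (d 1).natAbs + (d 2).natAbs + h.natAbs + 1 with hm₀
  -- the roots m•c + d
  have key : ∀ m : ℕ, m₀ ≤ m →
      (((m:ℤ)*H + h : ℤ) : ℝ)⁻¹ • (fun i => (((m:ℤ)*c i + d i : ℤ) : ℝ) : V) ∈ S := by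
    intro m hm
    have hnn : ∀ i, 0 ≤ (m:ℤ)*c i + d i := by
      intro i
      rcases hpos i with hci | ⟨hci, hdi⟩
      · have h1 : (m:ℤ) ≤ (m:ℤ) * c i := le_mul_of_one_le_right (Int.natCast_nonneg m) hci
        have h2 : -(d i) ≤ (d i).natAbs := by
          rcases Int.natAbs_eq (d i) with he | he <;> omega
        have h3 : ((d i).natAbs : ℤ) ≤ (m:ℤ) := by
          have : (d i).natAbs ≤ m := by
            have : i = 0 ∨ i = 1 ∨ i = 2 := by fin_cases i <;> simp
            rcases this with rfl | rfl | rfl <;> omega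
          exact_mod_cast this
        linarith
      · rw [hci, mul_zero, zero_add]; exact hdi
    set k : Fin 3 → ℕ := fun i => ((m:ℤ)*c i + d i).toNat with hk
    have hofk : ofNat3 k = (fun i => (((m:ℤ)*c i + d i : ℤ) : ℝ) : V) := by
      funext i
      simp only [ofNat3, hk]
      exact_mod_cast congrArg (Int.cast : ℤ → ℝ) (Int.toNat_of_nonneg (hnn i))
    have hlin : (fun i => (((m:ℤ)*c i + d i : ℤ) : ℝ) : V)
        = (m:ℝ) • (fun i => ((c i : ℝ)) : V) + (fun i => ((d i : ℝ)) : V) := by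
      funext i
      show (((m:ℤ)*c i + d i : ℤ) : ℝ) = (m:ℝ) * (c i : ℝ) + (d i : ℝ)
      push_cast; ring
    have hQβ : Q (ofNat3 k) = 1 := by
      rw [hofk, hlin, Q_smul_add, hC, hB, hD]; ring
    have hβmem : ofNat3 k ∈ Φpos := (mem_phipos_iff _).2 ⟨⟨k, rfl⟩, hQβ⟩
    refine ⟨ofNat3 k, hβmem, ?_⟩
    have hsumβ : (∑ i, ofNat3 k i) = (((m:ℤ)*H + h : ℤ) : ℝ) := by
      rw [Fin.sum_univ_three, hofk]
      show (((m:ℤ)*c 0 + d 0 : ℤ) : ℝ) + (((m:ℤ)*c 1 + d 1 : ℤ) : ℝ)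
        + (((m:ℤ)*c 2 + d 2 : ℤ) : ℝ) = _
      push_cast [hHdef, hhdef]; ring
    rw [hsumβ, hofk]
  -- convergence
  have hHpos : (0:ℝ) < (H:ℝ) := by exact_mod_cast hH1
  have htend : Tendsto (fun m : ℕ =>
      (((m:ℤ)*H + h : ℤ) : ℝ)⁻¹ • (fun i => (((m:ℤ)*c i + d i : ℤ) : ℝ) : V)) atTop
      (𝓝 (((H : ℤ) : ℝ)⁻¹ • (fun i => ((c i : ℝ)) : V))) := by
    rw [tendsto_pi_nhds]
    intro i
    have haux := aux_tendsto (H:ℝ) (h:ℝ) ((c i : ℝ)) ((d i : ℝ)) hHpos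
    apply haux.congr
    intro m
    have hsh : ((((m:ℤ)*H + h : ℤ) : ℝ)⁻¹ • (fun i => (((m:ℤ)*c i + d i : ℤ) : ℝ) : V)) i
        = ((((m:ℤ)*H + h : ℤ) : ℝ))⁻¹ * (((m:ℤ)*c i + d i : ℤ) : ℝ) := rfl
    rw [hsh]
    push_cast; ring
  exact mem_closure_of_tendsto htend (eventually_atTop.2 ⟨m₀, key⟩)

-- parametrization of the conic
def Fc (t : ℝ) : V := fun i =>
  if i = 0 then (t+1)^2 / (2*t^2+6) else if i = 1 then (t-1)^2 / (2*t^2+6) else 4 / (2*t^2+6)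

lemma Fc_cont : Continuous Fc := by
  apply continuous_pi
  intro i
  have hden : ∀ t : ℝ, 2*t^2+6 ≠ 0 := fun t => by positivity
  by_cases h0 : i = 0
  · simp only [Fc, h0, if_pos rfl]
    exact ((continuous_id.add continuous_const).pow 2).div (by fun_prop) hden
  · by_cases h1 : i = 1
    · simp only [Fc, h0, h1, if_neg, ite_true, ite_false, if_false]
      exact ((continuous_id.sub continuous_const).pow 2).div (by fun_prop) hden
    · simp only [Fc, h0, h1, if_neg, ite_false, if_false]
      exact continuous_const.div (by fun_prop) hden

lemma one_le_sq {z : ℤ} (hz : z ≠ 0) : 1 ≤ z^2 := by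
  have h0 : 0 ≤ z^2 := sq_nonneg z
  have h1 : z^2 ≠ 0 := pow_ne_zero 2 hz
  omega

-- a rational point of the conic with odd/even parametrization lies in the closure
lemma rational_dir_mem_closure (a b : ℤ) (ha : Odd a) (hb : Even b) (hb0 : b ≠ 0)
    (hcop : Int.gcd a b = 1) : Fc ((a:ℝ)/(b:ℝ)) ∈ closure S := by
  classical
  have hodd1 : Odd (b - a) := hb.sub_odd ha
  have hodd2 : Odd (b + a) := hb.add_odd ha
  -- coprimality of b-a and b+a
  have hgcd : IsCoprime (b - a) (b + a) := by
    rw [Int.isCoprime_iff_gcd_eq_one]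
    set g : ℕ := Int.gcd (b - a) (b + a) with hg
    have hg1 : (g:ℤ) ∣ (b - a) := Int.gcd_dvd_left _ _
    have hg2 : (g:ℤ) ∣ (b + a) := Int.gcd_dvd_right _ _
    have h2b : (g:ℤ) ∣ 2*b := by
      have h := dvd_add hg1 hg2
      rwa [show b - a + (b + a) = 2*b by ring] at h
    have h2a : (g:ℤ) ∣ 2*a := by
      have h := dvd_sub hg2 hg1
      rwa [show b + a - (b - a) = 2*a by ring] at h
    have hgodd : Odd (g:ℤ) := by
      rcases Int.even_or_odd (g:ℤ) with he | ho
      · exfalso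
        have h2 : (2:ℤ) ∣ (g:ℤ) := he.two_dvd
        obtain ⟨j, hj⟩ := h2.trans hg1
        obtain ⟨k, hk⟩ := hodd1
        omega
      · exact ho
    have hgoddN : Odd g := by exact_mod_cast hgodd
    have hcop2 : IsCoprime ((g:ℕ):ℤ) (2:ℤ) := by
      rw [Int.isCoprime_iff_gcd_eq_one]
      have hgg : Int.gcd ((g:ℕ):ℤ) 2 = Nat.gcd g 2 := by
        simp [Int.gcd, Int.natAbs_natCast]
      rw [hgg]
      exact (Nat.Prime.coprime_iff_not_dvd Nat.prime_two).2
        (by intro hdvd; obtain ⟨j, hj⟩ := hdvd; obtain ⟨k, hk⟩ := hgoddN; omega) |>.symm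
    have hgb : (g:ℤ) ∣ b := hcop2.dvd_of_dvd_mul_right (by rwa [mul_comm] at h2b)
    have hga : (g:ℤ) ∣ a := hcop2.dvd_of_dvd_mul_right (by rwa [mul_comm] at h2a)
    have hdvd1 : (g:ℤ) ∣ (1:ℤ) := by
      have := Int.dvd_gcd hga hgb
      rw [hcop] at this; exact_mod_cast this
    exact_mod_cast Int.eq_one_of_dvd_one (Int.natCast_nonneg g) hdvd1
  obtain ⟨s, t, hst⟩ := hgcd
  -- the isotropic vector and auxiliary root direction
  set c : Fin 3 → ℤ := ![(a+b)^2, (a-b)^2, 4*b^2] with hcdef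
  set d : Fin 3 → ℤ := ![s*(a+b), t*(a-b), 2*b*(s-t)] with hddef
  have e0 : c 0 = (a+b)^2 := rfl
  have e1 : c 1 = (a-b)^2 := rfl
  have e2 : c 2 = 4*b^2 := rfl
  have f0 : d 0 = s*(a+b) := rfl
  have f1 : d 1 = t*(a-b) := rfl
  have f2 : d 2 = 2*b*(s-t) := rfl
  have hab1 : a + b ≠ 0 := by
    obtain ⟨k, hk⟩ := hodd2; omega
  have hab2 : a - b ≠ 0 := by
    obtain ⟨k, hk⟩ := hodd1; omega
  have hC : Q (fun i => ((c i : ℝ))) = 0 := by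
    rw [Q_eq]; simp only [e0, e1, e2]; push_cast; ring
  have hB : B (fun i => ((c i : ℝ))) (fun i => ((d i : ℝ))) = 0 := by
    rw [B_eq]; simp only [e0, e1, e2, f0, f1, f2]; push_cast; ring
  have hstR : (s:ℝ)*((b:ℝ)-(a:ℝ)) + (t:ℝ)*((b:ℝ)+(a:ℝ)) = 1 := by exact_mod_cast hst
  have hD : Q (fun i => ((d i : ℝ))) = 1 := by
    rw [Q_eq]; simp only [f0, f1, f2]; push_cast
    linear_combination ((s:ℝ)*((b:ℝ)-(a:ℝ)) + (t:ℝ)*((b:ℝ)+(a:ℝ)) + 1) * hstR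
  have hpos : ∀ i, 1 ≤ c i ∨ (c i = 0 ∧ 0 ≤ d i) := by
    intro i
    have : i = 0 ∨ i = 1 ∨ i = 2 := by fin_cases i <;> simp
    rcases this with rfl | rfl | rfl
    · exact Or.inl (by rw [e0]; exact one_le_sq hab1)
    · exact Or.inl (by rw [e1]; exact one_le_sq hab2)
    · refine Or.inl ?_
      rw [e2]
      have := one_le_sq hb0
      linarith
  have hH1 : 1 ≤ c 0 + c 1 + c 2 := by
    rw [e0, e1, e2]
    have h1 := one_le_sq hab1
    have h2 := sq_nonneg (a - b)
    have h3 := sq_nonneg b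
    linarith
  have hmem := family_mem_closure c d hC hB hD hpos hH1
  -- identify the limit with Fc (a/b)
  have hbR : ((b:ℝ)) ≠ 0 := Int.cast_ne_zero.2 hb0
  have hident : Fc ((a:ℝ)/(b:ℝ)) = (((c 0 + c 1 + c 2 : ℤ) : ℝ))⁻¹ • (fun i => ((c i : ℝ)) : V) := by
    have hHval : ((c 0 + c 1 + c 2 : ℤ) : ℝ) = 2*(a:ℝ)^2 + 6*(b:ℝ)^2 := by
      rw [e0, e1, e2]; push_cast; ring
    have hHne : (2*(a:ℝ)^2 + 6*(b:ℝ)^2) ≠ 0 := by positivity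
    funext i
    have hsm : ((((c 0 + c 1 + c 2 : ℤ) : ℝ))⁻¹ • (fun i => ((c i : ℝ)) : V)) i
        = (((c 0 + c 1 + c 2 : ℤ) : ℝ))⁻¹ * ((c i : ℝ)) := rfl
    rw [hsm, hHval]
    have hdenne : 2*((a:ℝ)/(b:ℝ))^2+6 ≠ 0 := by positivity
    have : i = 0 ∨ i = 1 ∨ i = 2 := by fin_cases i <;> simp
    rcases this with rfl | rfl | rfl
    · show ((a:ℝ)/(b:ℝ)+1)^2 / (2*((a:ℝ)/(b:ℝ))^2+6) = _
      rw [show ((c 0 : ℝ)) = ((a:ℝ)+(b:ℝ))^2 by rw [e0]; push_cast; ring]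
      field_simp
      try ring
    · show ((a:ℝ)/(b:ℝ)-1)^2 / (2*((a:ℝ)/(b:ℝ))^2+6) = _
      rw [show ((c 1 : ℝ)) = ((a:ℝ)-(b:ℝ))^2 by rw [e1]; push_cast; ring]
      field_simp
      try ring
    · show (4:ℝ) / (2*((a:ℝ)/(b:ℝ))^2+6) = _
      rw [show ((c 2 : ℝ)) = 4*(b:ℝ)^2 by rw [e2]; push_cast; ring]
      field_simp
      try ring
  rw [hident]
  exact hmem

lemma odd_coprime_two {n : ℤ} (h : Odd n) : IsCoprime n (2:ℤ) := by
  rw [Int.isCoprime_iff_gcd_eq_one]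
  have h1 : Odd n.natAbs := Int.natAbs_odd.2 h
  have : Int.gcd n 2 = Nat.gcd n.natAbs 2 := by simp [Int.gcd]
  rw [this]
  exact ((Nat.Prime.coprime_iff_not_dvd Nat.prime_two).2
    (by intro hdvd; obtain ⟨j, hj⟩ := hdvd; obtain ⟨k, hk⟩ := h1; omega)).symm

lemma isotropic_imp_closure (p : V) (hp : (∑ i, p i) = 1) (hQ : Q p = 0) : p ∈ closure S := by
  classical
  rw [Fin.sum_univ_three] at hp
  have hQ' : 2*(p 0*p 0 + p 1*p 1 + p 2*p 2) - (p 0+p 1+p 2)*(p 0+p 1+p 2) = 0 := by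
    rw [← Q_eq]; exact hQ
  have hkey : (p 0 - p 1)^2 = p 2 * (2 - 3*p 2) := by
    linear_combination hQ' + 2*(p 2)*hp
  have hp2a : 0 ≤ p 2 := by nlinarith [sq_nonneg (p 0 - p 1)]
  have hp2b : 3*p 2 ≤ 2 := by nlinarith [sq_nonneg (p 0 - p 1)]
  by_cases hy0 : p 2 = 0
  · -- the cusp (1/2, 1/2, 0)
    have hsq : (p 0 - p 1)^2 = 0 := by rw [hkey, hy0]; ring
    have hp01 : p 0 = p 1 := by
      have := pow_eq_zero_iff (n := 2) (by norm_num) |>.1 hsq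
      linarith
    have hp0 : p 0 = 1/2 := by rw [hy0] at hp; linarith
    set c : Fin 3 → ℤ := ![1,1,0] with hcdef
    set d : Fin 3 → ℤ := ![1,0,0] with hddef
    have e0 : c 0 = 1 := rfl
    have e1 : c 1 = 1 := rfl
    have e2 : c 2 = 0 := rfl
    have f0 : d 0 = 1 := rfl
    have f1 : d 1 = 0 := rfl
    have f2 : d 2 = 0 := rfl
    have hmem := family_mem_closure c d
      (by rw [Q_eq]; simp only [e0, e1, e2]; norm_num)
      (by rw [B_eq]; simp only [e0, e1, e2, f0, f1, f2]; norm_num)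
      (by rw [Q_eq]; simp only [f0, f1, f2]; norm_num)
      (by intro i
          have : i = 0 ∨ i = 1 ∨ i = 2 := by fin_cases i <;> simp
          rcases this with rfl | rfl | rfl
          · exact Or.inl (by rw [e0])
          · exact Or.inl (by rw [e1])
          · exact Or.inr ⟨e2, by rw [f2]⟩)
      (by rw [e0, e1, e2]; norm_num)
    have hpid : p = (((c 0 + c 1 + c 2 : ℤ) : ℝ))⁻¹ • (fun i => ((c i : ℝ)) : V) := by
      funext i
      have hsm : ((((c 0 + c 1 + c 2 : ℤ) : ℝ))⁻¹ • (fun i => ((c i : ℝ)) : V)) i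
          = (((c 0 + c 1 + c 2 : ℤ) : ℝ))⁻¹ * ((c i : ℝ)) := rfl
      rw [hsm, e0, e1, e2]
      have : i = 0 ∨ i = 1 ∨ i = 2 := by fin_cases i <;> simp
      rcases this with rfl | rfl | rfl
      · rw [e0]; norm_num [hp0]
      · rw [e1]; norm_num [hp0, ← hp01]
      · rw [e2]; norm_num [hy0]
    rw [hpid]; exact hmem
  · -- generic point of the conic
    have hp2pos : 0 < p 2 := lt_of_le_of_ne hp2a (Ne.symm hy0)
    set y : ℝ := Real.sqrt (p 2) / 2 with hydef
    have hy : 0 < y := by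
      have := Real.sqrt_pos.2 hp2pos
      rw [hydef]; linarith
    have hyne : y ≠ 0 := hy.ne'
    set x : ℝ := (if p 1 ≤ p 0 then (1:ℝ) else (-1:ℝ)) * (Real.sqrt (2 - 3*p 2) / 2) with hxdef
    have hy2 : y^2 = p 2/4 := by
      rw [hydef, div_pow, Real.sq_sqrt hp2a]; norm_num
    have hx2 : x^2 = (2 - 3*p 2)/4 := by
      rw [hxdef]
      split_ifs <;> rw [mul_pow, div_pow, Real.sq_sqrt (by linarith)] <;> norm_num
    have h4xy : 4*x*y = p 0 - p 1 := by
      have hs : Real.sqrt (2 - 3*p 2) * Real.sqrt (p 2) = |p 0 - p 1| := by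
        rw [← Real.sqrt_mul (by linarith : (0:ℝ) ≤ 2 - 3*p 2)]
        rw [show (2 - 3*p 2) * p 2 = (p 0 - p 1)^2 by linear_combination -hkey]
        exact Real.sqrt_sq_eq_abs _
      rw [hxdef, hydef]
      split_ifs with hcase
      · rw [abs_of_nonneg (by linarith : (0:ℝ) ≤ p 0 - p 1)] at hs
        field_simp
        linear_combination 4 * hs
      · rw [abs_of_neg (by linarith : p 0 - p 1 < 0)] at hs
        field_simp
        linear_combination -4 * hs
    set τ : ℝ := x / y with hτdef
    have hxy0 : (x+y)^2 = p 0 := by linear_combination hx2 + hy2 + h4xy/2 - hp/2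
    have hxy1 : (x-y)^2 = p 1 := by linear_combination hx2 + hy2 - h4xy/2 - hp/2
    have hxy2 : 4*y^2 = p 2 := by linear_combination 4*hy2
    have hone : 2*x^2 + 6*y^2 = 1 := by linear_combination 2*hx2 + 6*hy2
    have hFc : Fc τ = p := by
      funext i
      have hdq : 2*τ^2 + 6 = 1/y^2 := by
        rw [hτdef, div_pow]
        field_simp
        linear_combination 2*hx2 + 6*hy2
      have : i = 0 ∨ i = 1 ∨ i = 2 := by fin_cases i <;> simp
      rcases this with rfl | rfl | rfl
      · show (τ+1)^2 / (2*τ^2+6) = p 0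
        rw [hdq, show τ + 1 = (x+y)/y by rw [hτdef]; field_simp, div_pow, one_div, div_inv_eq_mul]
        rw [div_mul_cancel₀ _ (pow_ne_zero 2 hyne)]
        exact hxy0
      · show (τ-1)^2 / (2*τ^2+6) = p 1
        rw [hdq, show τ - 1 = (x-y)/y by rw [hτdef]; field_simp, div_pow, one_div, div_inv_eq_mul]
        rw [div_mul_cancel₀ _ (pow_ne_zero 2 hyne)]
        exact hxy1
      · show (4:ℝ) / (2*τ^2+6) = p 2
        rw [hdq, one_div, div_inv_eq_mul]
        linear_combination 4*hy2
    -- rational approximations of τ with odd/even parity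
    set A : ℕ → ℤ := fun M => 2*⌊(M:ℝ)*τ⌋+1 with hAdef
    set Bm : ℕ → ℤ := fun M => 2*(M:ℤ) with hBdef
    have hratio : Filter.Tendsto (fun M : ℕ => ((A M : ℝ))/((Bm M : ℝ))) Filter.atTop (𝓝 τ) := by
      rw [tendsto_iff_dist_tendsto_zero]
      apply squeeze_zero (fun M => dist_nonneg)
        (g := fun M : ℕ => if M = 0 then |τ| else 1/(2*(M:ℝ)))
      · intro M
        by_cases hM : M = 0
        · simp [hM, hAdef, hBdef, Real.dist_eq]
        · rw [if_neg hM]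
          have hMpos : (0:ℝ) < (M:ℝ) := by
            have : 0 < M := Nat.pos_of_ne_zero hM
            exact_mod_cast this
          have hfl1 := Int.floor_le ((M:ℝ)*τ)
          have hfl2 := Int.lt_floor_add_one ((M:ℝ)*τ)
          have hAcast : ((A M : ℝ)) = 2*((⌊(M:ℝ)*τ⌋ : ℤ) : ℝ) + 1 := by
            rw [hAdef]; push_cast; ring
          have hBcast : ((Bm M : ℝ)) = 2*(M:ℝ) := by rw [hBdef]; push_cast; ring
          rw [Real.dist_eq, hAcast, hBcast]
          rw [show (2*((⌊(M:ℝ)*τ⌋ : ℤ) : ℝ) + 1)/(2*(M:ℝ)) - τ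
            = (2*((⌊(M:ℝ)*τ⌋ : ℤ) : ℝ) + 1 - 2*(M:ℝ)*τ)/(2*(M:ℝ)) by field_simp; try ring]
          rw [abs_div, abs_of_pos (by linarith : (0:ℝ) < 2*(M:ℝ))]
          apply div_le_div_of_nonneg_right ?_ (by linarith)
          exact abs_le.2 ⟨by linarith, by linarith⟩
      · have hg : Filter.Tendsto (fun M : ℕ => 1/(2*(M:ℝ))) Filter.atTop (𝓝 0) := by
          have h := tendsto_one_div_atTop_nhds_zero_nat.const_mul (1/2 : ℝ)
          rw [mul_zero] at h
          apply h.congr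
          intro M
          rw [one_div_mul_one_div]
        apply hg.congr'
        filter_upwards [Filter.eventually_ne_atTop 0] with M hM
        rw [if_neg hM]
    -- each approximant lies in the closure
    have hFmem : ∀ M : ℕ, 1 ≤ M → Fc (((A M : ℝ))/((Bm M : ℝ))) ∈ closure S := by
      intro M hM
      set g : ℕ := Int.gcd (A M) (Bm M) with hgdef
      have hA_odd : Odd (A M) := ⟨⌊(M:ℝ)*τ⌋, by simp only [hAdef]; try ring⟩
      have hBm_ne : Bm M ≠ 0 := by
        simp only [hBdef]
        intro h
        omega
      have hgpos : 0 < g := Int.gcd_pos_iff.2 (Or.inr hBm_ne)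
      have hgdvdA : ((g:ℕ):ℤ) ∣ A M := Int.gcd_dvd_left _ _
      have hgdvdB : ((g:ℕ):ℤ) ∣ Bm M := Int.gcd_dvd_right _ _
      set a' : ℤ := A M / (g:ℕ) with ha'def
      set b' : ℤ := Bm M / (g:ℕ) with hb'def
      have hA_eq : a' * (g:ℕ) = A M := Int.ediv_mul_cancel hgdvdA
      have hB_eq : b' * (g:ℕ) = Bm M := Int.ediv_mul_cancel hgdvdB
      have hg_ne : ((g:ℕ):ℤ) ≠ 0 := by exact_mod_cast hgpos.ne'
      have ha'odd : Odd a' := by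
        rcases Int.even_or_odd a' with he | ho
        · exfalso
          have hev : Even (a' * ((g:ℕ):ℤ)) := he.mul_right _
          rw [hA_eq] at hev
          exact (Int.not_odd_iff_even.2 hev) hA_odd
        · exact ho
      have hgodd : Odd ((g:ℕ):ℤ) := by
        rcases Int.even_or_odd ((g:ℕ):ℤ) with he | ho
        · exfalso
          have hev : Even (a' * ((g:ℕ):ℤ)) := he.mul_left _
          rw [hA_eq] at hev
          exact (Int.not_odd_iff_even.2 hev) hA_odd
        · exact ho
      have hgM : ((g:ℕ):ℤ) ∣ (M:ℤ) := by
        have h2M : ((g:ℕ):ℤ) ∣ (M:ℤ)*2 := by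
          rw [mul_comm]
          simpa only [hBdef] using hgdvdB
        exact (odd_coprime_two hgodd).dvd_of_dvd_mul_right h2M
      have hb'even : Even b' := by
        obtain ⟨m, hm⟩ := hgM
        refine ⟨m, ?_⟩
        have hbg : b' * ((g:ℕ):ℤ) = (m + m) * ((g:ℕ):ℤ) := by
          rw [hB_eq]
          simp only [hBdef]
          rw [hm]; ring
        exact mul_right_cancel₀ hg_ne hbg
      have hb'ne : b' ≠ 0 := by
        intro h
        rw [h, zero_mul] at hB_eq
        exact hBm_ne hB_eq.symm
      have hcop' : Int.gcd a' b' = 1 := Int.gcd_div_gcd_div_gcd hgpos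
      have hmem := rational_dir_mem_closure a' b' ha'odd hb'even hb'ne hcop'
      have hb'R : ((b':ℤ):ℝ) ≠ 0 := Int.cast_ne_zero.2 hb'ne
      have hBmR : ((Bm M : ℤ):ℝ) ≠ 0 := Int.cast_ne_zero.2 hBm_ne
      have hAR : ((a':ℝ)) * (((g:ℕ):ℤ):ℝ) = ((A M : ℝ)) := by
        have := congrArg (fun z : ℤ => (z:ℝ)) hA_eq
        push_cast at this ⊢
        exact this
      have hBR : ((b':ℝ)) * (((g:ℕ):ℤ):ℝ) = ((Bm M : ℝ)) := by
        have := congrArg (fun z : ℤ => (z:ℝ)) hB_eq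
        push_cast at this ⊢
        exact this
      have hratio_eq : ((a':ℝ))/((b':ℝ)) = ((A M:ℝ))/((Bm M:ℝ)) := by
        rw [div_eq_div_iff hb'R hBmR]
        push_cast at hAR hBR ⊢
        linear_combination ((b':ℝ)) * hAR - ((a':ℝ)) * hBR
      rw [← hratio_eq]
      exact hmem
    have htendF : Filter.Tendsto (fun M : ℕ => Fc (((A M:ℝ))/((Bm M:ℝ)))) Filter.atTop (𝓝 p) := by
      rw [← hFc]
      exact (Fc_cont.tendsto τ).comp hratio
    have hfinal : p ∈ closure (closure S) := mem_closure_of_tendsto htendF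
      (Filter.eventually_atTop.2 ⟨1, hFmem⟩)
    rwa [closure_closure] at hfinal

theorem isotropic_imp_acc (p : V) (hp : (∑ i, p i) = 1) (hQ : Q p = 0) :
    AccPt p (Filter.principal S) := by
  rw [accPt_iff_nhds]
  intro U hU
  have hclos := isotropic_imp_closure p hp hQ
  rw [mem_closure_iff_nhds] at hclos
  obtain ⟨z, hzU, hzS⟩ := hclos U hU
  refine ⟨z, ⟨hzU, hzS⟩, ?_⟩
  intro he
  have := Q_pos_of_S hzS
  rw [he, hQ] at this
  exact lt_irrefl 0 this

/-- `R ⊆ Φ⁺` is closed if for all `a, b ∈ R`, `Span_{≥0}{a,b} ∩ Φ⁺ ⊆ R`. -/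
def IsClosedSet (R : Set V) : Prop := ∀ a ∈ R, ∀ b ∈ R, nnspan {a, b} ∩ Φpos ⊆ R

/-- `R` is a biclosed subset of `Φ⁺`. -/
def IsBiclosed (R : Set V) : Prop := R ⊆ Φpos ∧ IsClosedSet R ∧ IsClosedSet (Φpos \ R)

/-- A point of the affine plane `x + y + z = 1` is an accumulation point of the set of
rescaled positive roots `{β/height(β) : β ∈ Φ⁺}` iff it lies on the isotropic cone. -/
theorem accumulation_points_of_rescaled_roots (p : V) (hp : (∑ i, p i) = 1) :
    AccPt p (Filter.principal {x : V | ∃ β ∈ Φpos, x = (∑ i, β i)⁻¹ • β}) ↔ Q p = 0 := by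
  show AccPt p (Filter.principal S) ↔ Q p = 0
  constructor
  · exact acc_imp_isotropic p
  · exact isotropic_imp_acc p hp
end
end

section
/- (a) For every positive integer N, the set of roots γ ∈ Φ⁺ with height(γ) ≤ N is finite. (b) If α, β, γ ∈ Φ⁺ satisfy γ ∈ Span_{≥0}{α, β} and γ ∉ {α, β}, then height(γ) > min(height(α), height(β)). -/
open scoped NNReal

noncomputable section

/-! ### Auxiliary lemmas -/

lemma B_expand (x y : V) : B x y = 2*(x 0 * y 0 + x 1 * y 1 + x 2 * y 2) -
    (x 0 + x 1 + x 2)*(y 0 + y 1 + y 2) := by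
  simp [B, Fin.sum_univ_three]

lemma sum3 (x : V) : ∑ i, x i = x 0 + x 1 + x 2 := Fin.sum_univ_three x

lemma Q_expand (x : V) : Q x = 2*((x 0)^2+(x 1)^2+(x 2)^2) - (x 0 + x 1 + x 2)^2 := by
  simp [Q, B_expand]; ring

lemma B_alpha_self (i : Fin 3) : B (α i) (α i) = 1 := by
  fin_cases i <;> simp [B_expand, α] <;> norm_num

lemma B_sub_smul (x y z : V) (u v : ℝ) :
    B (x - u • z) (y - v • z) = B x y - v * B x z - u * B z y + u*v*B z z := by
  simp [B_expand]; ring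

lemma refl_preserves_B {f : V ≃ₗ[ℝ] V} (hf : IsSimpleReflection f) (x y : V) :
    B (f x) (f y) = B x y := by
  obtain ⟨i, hi⟩ := hf
  rw [hi x, hi y, B_sub_smul, B_alpha_self]
  have : B x (α i) = B (α i) x := by simp [B_expand]; ring
  rw [this]; ring

lemma W_preserves_B {w : V ≃ₗ[ℝ] V} (hw : w ∈ W) : ∀ x y, B (w x) (w y) = B x y := by
  induction hw using Subgroup.closure_induction with
  | mem f hf => exact refl_preserves_B hf
  | one => intro x y; rfl
  | mul f g _ _ hf hg =>
      intro x y
      have : ∀ z : V, (f * g) z = f (g z) := fun z => rfl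
      rw [this, this, hf, hg]
  | inv f _ hf =>
      intro x y
      have h1 : f (f⁻¹ x) = x := f.apply_symm_apply x
      have h2 : f (f⁻¹ y) = y := f.apply_symm_apply y
      calc B (f⁻¹ x) (f⁻¹ y) = B (f (f⁻¹ x)) (f (f⁻¹ y)) := (hf _ _).symm
        _ = B x y := by rw [h1, h2]

/-- Vectors with integer coordinates. -/
def IsIntVec (x : V) : Prop := ∀ i, ∃ n : ℤ, x i = n

lemma refl_int {f : V ≃ₗ[ℝ] V} (hf : IsSimpleReflection f) {x : V} (hx : IsIntVec x) :
    IsIntVec (f x) := by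
  obtain ⟨i, hi⟩ := hf
  obtain ⟨n0, h0⟩ := hx 0; obtain ⟨n1, h1⟩ := hx 1; obtain ⟨n2, h2⟩ := hx 2
  intro j
  rw [hi x]
  have hB : ∃ m : ℤ, B (α i) x = m := by
    fin_cases i
    · exact ⟨2*n0-(n0+n1+n2), by simp [B_expand, α, h0, h1, h2]; try (push_cast; ring)⟩
    · exact ⟨2*n1-(n0+n1+n2), by simp [B_expand, α, h0, h1, h2]; try (push_cast; ring)⟩
    · exact ⟨2*n2-(n0+n1+n2), by simp [B_expand, α, h0, h1, h2]; try (push_cast; ring)⟩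
  obtain ⟨m, hm⟩ := hB
  have : (x - (2 * B (α i) x) • α i) j = x j - (2*m) * (α i j) := by
    simp [hm]
  rw [this]
  have : ∃ k : ℤ, α i j = k := by
    by_cases h : j = i
    · exact ⟨1, by simp [α, Pi.single_apply, h]⟩
    · exact ⟨0, by simp [α, Pi.single_apply, h]⟩
  obtain ⟨k, hk⟩ := this
  obtain ⟨nj, hj⟩ : ∃ n : ℤ, x j = n := hx j
  exact ⟨nj - 2*m*k, by rw [hj, hk]; push_cast; ring⟩

lemma refl_invol {f : V ≃ₗ[ℝ] V} (hf : IsSimpleReflection f) (x : V) : f (f x) = x := by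
  obtain ⟨i, hi⟩ := hf
  rw [hi x, hi _]
  have hB : B (α i) (x - (2 * B (α i) x) • α i) = - B (α i) x := by
    have expand : B (α i) (x - (2 * B (α i) x) • α i)
        = B (α i) x - (2 * B (α i) x) * B (α i) (α i) := by
      simp [B_expand]; ring
    rw [expand, B_alpha_self]; ring
  rw [hB]
  ext j
  simp only [Pi.sub_apply, Pi.smul_apply, smul_eq_mul]
  ring

lemma W_int {w : V ≃ₗ[ℝ] V} (hw : w ∈ W) :
    (∀ x, IsIntVec x → IsIntVec (w x)) ∧ (∀ x, IsIntVec x → IsIntVec (w⁻¹ x)) := by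
  induction hw using Subgroup.closure_induction with
  | mem f hf =>
      constructor
      · exact fun x hx => refl_int hf hx
      · intro x hx
        have : f⁻¹ x = f x := by
          have h := refl_invol hf x
          calc f⁻¹ x = f⁻¹ (f (f x)) := by rw [h]
            _ = f x := f.symm_apply_apply (f x)
        rw [this]; exact refl_int hf hx
  | one => exact ⟨fun x hx => hx, fun x hx => hx⟩
  | mul f g _ _ hf hg =>
      refine ⟨fun x hx => ?_, fun x hx => ?_⟩
      · exact hf.1 _ (hg.1 _ hx)
      · have : (f * g)⁻¹ x = g⁻¹ (f⁻¹ x) := rfl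
        rw [this]; exact hg.2 _ (hf.2 _ hx)
  | inv f _ hf => exact ⟨hf.2, by simpa using hf.1⟩

lemma alpha_int (i : Fin 3) : IsIntVec (α i) := by
  intro j
  by_cases h : j = i
  · exact ⟨1, by simp [α, Pi.single_apply, h]⟩
  · exact ⟨0, by simp [α, Pi.single_apply, h]⟩

lemma root_int {γ : V} (hγ : γ ∈ Φ) : IsIntVec γ := by
  obtain ⟨w, hw, i, rfl⟩ := hγ
  exact (W_int hw).1 _ (alpha_int i)

lemma root_Q {γ : V} (hγ : γ ∈ Φ) : Q γ = 1 := by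
  obtain ⟨w, hw, i, rfl⟩ := hγ
  show B _ _ = 1
  rw [W_preserves_B hw, B_alpha_self]

lemma nnspan_nonneg' : ∀ v ∈ Submodule.span ℝ≥0 Δ, ∀ i, 0 ≤ v i := by
  intro v hv
  induction hv using Submodule.span_induction with
  | mem x hx =>
      obtain ⟨i, rfl⟩ := hx
      intro j
      by_cases h : j = i <;> simp [α, Pi.single_apply, h]
  | zero => intro j; simp
  | add x y hxm hym hx hy => intro j; exact add_nonneg (hx j) (hy j)
  | smul r x hxm hx =>
      intro j
      have : (r • x) j = (r : ℝ) * x j := rfl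
      rw [this]
      exact mul_nonneg r.coe_nonneg (hx j)

lemma nnspan_nonneg {v : V} (hv : v ∈ nnspan Δ) : ∀ i, 0 ≤ v i :=
  nnspan_nonneg' v hv

lemma mem_nnspan_pair {a b c : V} (h : c ∈ nnspan {a, b}) :
    ∃ s t : ℝ, 0 ≤ s ∧ 0 ≤ t ∧ c = s • a + t • b := by
  have h' : c ∈ Submodule.span ℝ≥0 ({a, b} : Set V) := h
  rw [Submodule.mem_span_pair] at h'
  obtain ⟨s, t, hst⟩ := h'
  exact ⟨s, t, s.coe_nonneg, t.coe_nonneg, by rw [← hst]; rfl⟩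

lemma height_ge_one {x : V} (hq : Q x = 1) (hn : ∀ i, 0 ≤ x i) : 1 ≤ ∑ i, x i := by
  rw [Q_expand] at hq
  rw [sum3]
  nlinarith [hn 0, hn 1, hn 2, mul_nonneg (hn 0) (hn 1), mul_nonneg (hn 1) (hn 2),
    mul_nonneg (hn 0) (hn 2), sq_nonneg (x 0 + x 1 + x 2)]

lemma lagrange (a0 a1 a2 b0 b1 b2 : ℝ) :
    (2*(a0*b0+a1*b1+a2*b2) - (2/3)*(a0+a1+a2)*(b0+b1+b2))^2
      ≤ (2*(a0^2+a1^2+a2^2) - (2/3)*(a0+a1+a2)^2) *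
        (2*(b0^2+b1^2+b2^2) - (2/3)*(b0+b1+b2)^2) := by
  nlinarith [sq_nonneg ((a0-a1)*(b1-b2) - (a1-a2)*(b0-b1)),
    sq_nonneg ((a0-a1)*(b0-b2) - (a0-a2)*(b0-b1)),
    sq_nonneg ((a1-a2)*(b0-b2) - (a0-a2)*(b1-b2))]

lemma cs_abstract (P Qs X : ℝ) (h0 : 0 ≤ Qs) (hle : Qs ≤ P)
    (hX : X^2 ≤ (1+P^2/3)*(1+Qs^2/3)) : Qs*X ≤ P*(1+Qs^2/3) := by
  have hP : 0 ≤ P := le_trans h0 hle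
  rcases le_or_gt X 0 with hx | hx
  · have h1 : Qs*X ≤ 0 := mul_nonpos_of_nonneg_of_nonpos h0 hx
    have h2 : 0 ≤ P*(1+Qs^2/3) := by positivity
    linarith
  · have h1 : (Qs*X)^2 ≤ Qs^2 * ((1+P^2/3)*(1+Qs^2/3)) := by nlinarith [sq_nonneg Qs]
    have h3 : 0 ≤ P^2 - Qs^2 := by nlinarith
    have h2 : Qs^2 * ((1+P^2/3)*(1+Qs^2/3)) ≤ (P*(1+Qs^2/3))^2 := by
      nlinarith [mul_nonneg (by positivity : (0:ℝ) ≤ 1+Qs^2/3) h3]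
    by_contra hcon
    push_neg at hcon
    have hq : 0 ≤ P*(1+Qs^2/3) := by positivity
    have : (P*(1+Qs^2/3))^2 < (Qs*X)^2 := by
      exact pow_lt_pow_left₀ hcon hq (by norm_num)
    linarith

/-- Cauchy–Schwarz style bound: for unit vectors of the form `Q = 1`,
`(∑ b) * B a b ≤ ∑ a` whenever `0 ≤ ∑ b ≤ ∑ a`. -/
lemma B_CS (a b : V) (qa : Q a = 1) (qb : Q b = 1)
    (h0 : 0 ≤ ∑ i, b i) (hle : (∑ i, b i) ≤ ∑ i, a i) :
    (∑ i, b i) * B a b ≤ ∑ i, a i := by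
  simp only [sum3] at h0 hle ⊢
  rw [Q_expand] at qa qb
  rw [B_expand]
  have lag := lagrange (a 0) (a 1) (a 2) (b 0) (b 1) (b 2)
  have hEa : 2*((a 0)^2+(a 1)^2+(a 2)^2) - (2/3)*(a 0 + a 1 + a 2)^2
      = 1 + (a 0 + a 1 + a 2)^2/3 := by linear_combination qa
  have hEb : 2*((b 0)^2+(b 1)^2+(b 2)^2) - (2/3)*(b 0 + b 1 + b 2)^2
      = 1 + (b 0 + b 1 + b 2)^2/3 := by linear_combination qb
  rw [hEa, hEb] at lag
  have key := cs_abstract (a 0 + a 1 + a 2) (b 0 + b 1 + b 2)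
    (2*(a 0 * b 0 + a 1 * b 1 + a 2 * b 2)
      - (2/3)*(a 0 + a 1 + a 2)*(b 0 + b 1 + b 2)) h0 hle lag
  nlinarith [key, sq_nonneg (b 0 + b 1 + b 2)]

/-- The key real-arithmetic core for the case `B a b > 1`. -/
lemma core (p q s t β : ℝ) (hq1 : 1 ≤ q) (hqp : q ≤ p)
    (hs : 0 < s) (ht : 0 < t) (hβ : 1 < β) (hk : s^2 + t^2 + 2*s*t*β = 1)
    (hcs : q*β ≤ p) : q < s*p + t*q := by
  have hst : s + t < 1 := by nlinarith [mul_pos hs ht]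
  have ht1 : t < 1 := by linarith
  have h2 : (s*p + t*q - q)*(1+t) = s*(p*(1+t) - q*s - 2*q*t*β) := by
    linear_combination q * hk
  have e1 : 0 ≤ 2*t*(p - q*β) := by nlinarith
  have e2 : 0 < q*(1 - t - s) := by nlinarith
  have e3 : 0 ≤ (p - q)*(1-t) := by nlinarith
  have h3 : 0 < p*(1+t) - q*s - 2*q*t*β := by nlinarith [e1, e2, e3]
  have h4 : 0 < (s*p + t*q - q)*(1+t) := by rw [h2]; exact mul_pos hs h3
  nlinarith [h4]

lemma comb_apply (a b : V) (s t : ℝ) (i : Fin 3) : (s • a + t • b) i = s * a i + t * b i := rfl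

lemma Q_comb (a b : V) (s t : ℝ) :
    Q (s • a + t • b) = s^2 * Q a + t^2 * Q b + 2*s*t*(B a b) := by
  rw [Q_expand, Q_expand, Q_expand, B_expand]
  simp only [comb_apply]
  ring

lemma sum_comb (a b : V) (s t : ℝ) :
    ∑ i, (s • a + t • b) i = s * (∑ i, a i) + t * (∑ i, b i) := by
  rw [sum3, sum3, sum3]
  simp only [comb_apply]
  ring

set_option maxHeartbeats 1000000 in
/-- (a) There are finitely many positive roots of height at most `N`.
(b) If `c ∈ Span_{≥0}{a,b}` is a positive root distinct from positive roots `a, b`,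
then `height(c) > min(height(a), height(b))`. -/
theorem height_statistics :
    (∀ N : ℕ, 0 < N → {γ ∈ Φpos | (∑ i, γ i) ≤ (N : ℝ)}.Finite) ∧
    (∀ a b c : V, a ∈ Φpos → b ∈ Φpos → c ∈ Φpos →
      c ∈ nnspan {a, b} → c ≠ a → c ≠ b →
      min (∑ i, a i) (∑ i, b i) < ∑ i, c i) := by
  constructor
  · -- part (a)
    intro N _
    have hsub : {γ ∈ Φpos | (∑ i, γ i) ≤ (N : ℝ)} ⊆
        (fun f : Fin 3 → ℤ => (fun i => (f i : ℝ))) ''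
          (Set.Icc (0 : Fin 3 → ℤ) (fun _ => (N : ℤ))) := by
      rintro γ ⟨⟨hΦγ, hspanγ⟩, hht⟩
      have hint := root_int hΦγ
      have hnn := nnspan_nonneg hspanγ
      have hcoord : ∀ i, γ i ≤ (N : ℝ) := by
        intro i
        have hle : γ i ≤ ∑ j, γ j :=
          Finset.single_le_sum (f := γ) (fun j _ => hnn j) (Finset.mem_univ i)
        linarith
      refine ⟨fun i => ⌊γ i⌋, ?_, ?_⟩
      · rw [Set.mem_Icc]
        constructor <;> intro i
        · obtain ⟨n, hn⟩ := hint i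
          have : (0:ℝ) ≤ n := hn ▸ hnn i
          have : (0:ℤ) ≤ n := by exact_mod_cast this
          simpa [hn] using this
        · obtain ⟨n, hn⟩ := hint i
          have : (n:ℝ) ≤ (N:ℝ) := hn ▸ hcoord i
          have : n ≤ (N:ℤ) := by exact_mod_cast this
          simpa [hn] using this
      · funext i
        obtain ⟨n, hn⟩ := hint i
        simp [hn]
    exact Set.Finite.subset (Set.Finite.image _ (Set.finite_Icc _ _)) hsub
  · -- part (b)
    intro a b c ha hb hc hspan hca hcb
    obtain ⟨s, t, hs0, ht0, hceq⟩ := mem_nnspan_pair hspan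
    have qa := root_Q ha.1
    have qb := root_Q hb.1
    have qc := root_Q hc.1
    have na := nnspan_nonneg ha.2
    have nb := nnspan_nonneg hb.2
    have hpa : 1 ≤ ∑ i, a i := height_ge_one qa na
    have hpb : 1 ≤ ∑ i, b i := height_ge_one qb nb
    have key : s^2 + t^2 + 2*s*t*(B a b) = 1 := by
      have h := qc
      rw [hceq, Q_comb, qa, qb] at h
      linarith
    have hlc : ∑ i, c i = s * (∑ i, a i) + t * (∑ i, b i) := by
      rw [hceq, sum_comb]
    -- rule out s = 0 and t = 0
    rcases eq_or_lt_of_le ht0 with ht0' | htpos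
    · exfalso
      apply hca
      have hs1 : s^2 = 1 := by rw [← ht0'] at key; linarith
      have hs1' : s = 1 := by nlinarith
      rw [hceq, ← ht0', hs1']
      simp
    rcases eq_or_lt_of_le hs0 with hs0' | hspos
    · exfalso
      apply hcb
      have ht1 : t^2 = 1 := by rw [← hs0'] at key; linarith
      have ht1' : t = 1 := by nlinarith
      rw [hceq, ← hs0', ht1']
      simp
    rcases lt_trichotomy (B a b) 1 with hB | hB | hB
    · -- B < 1 : s + t > 1
      have hst : 1 < s + t := by nlinarith [mul_pos hspos htpos]
      rcases le_total (∑ i, a i) (∑ i, b i) with h | h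
      · rw [min_eq_left h, hlc]
        nlinarith [mul_nonneg (le_of_lt htpos) (sub_nonneg.2 h)]
      · rw [min_eq_right h, hlc]
        nlinarith [mul_nonneg (le_of_lt hspos) (sub_nonneg.2 h)]
    · -- B = 1 : s + t = 1
      rw [hB] at key
      have h1 : (s+t-1)*((s+t)+1) = 0 := by linear_combination key
      have hst : s + t = 1 := by
        rcases mul_eq_zero.1 h1 with h | h
        · linarith
        · exfalso; nlinarith
      rcases eq_or_ne (∑ i, a i) (∑ i, b i) with hpq | hpq
      · -- equal heights: show c = a, contradiction
        exfalso
        apply hca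
        have hBac : B a c = 1 := by
          rw [hceq]
          have : B a (s • a + t • b) = s * Q a + t * B a b := by
            rw [Q_expand, B_expand, B_expand]
            simp only [comb_apply]
            ring
          rw [this, qa, hB]
          linarith
        have hQsub : Q (c - a) = 0 := by
          have : Q (c - a) = Q c - 2 * B a c + Q a := by
            rw [Q_expand, Q_expand, Q_expand, B_expand]
            simp only [Pi.sub_apply]
            ring
          rw [this, qc, qa, hBac]; ring
        have hlsub : (c 0 - a 0) + (c 1 - a 1) + (c 2 - a 2) = 0 := by
          have h2 : ∑ i, c i = ∑ i, a i := by
            rw [hlc, ← hpq]; linear_combination (∑ i, a i) * hst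
          rw [sum3, sum3] at h2
          linarith
        rw [Q_expand] at hQsub
        simp only [Pi.sub_apply] at hQsub
        have hsq : (c 0 - a 0)^2 + (c 1 - a 1)^2 + (c 2 - a 2)^2 = 0 := by
          linear_combination (1/2) * hQsub
            + ((c 0 - a 0 + (c 1 - a 1) + (c 2 - a 2))/2) * hlsub
        have e0 : c 0 - a 0 = 0 := by
          have hle0 : (c 0 - a 0)^2 ≤ 0 := by
            nlinarith [sq_nonneg (c 1 - a 1), sq_nonneg (c 2 - a 2)]
          have heq0 : (c 0 - a 0)^2 = 0 := le_antisymm hle0 (sq_nonneg _)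
          exact pow_eq_zero_iff (by norm_num : (2:ℕ) ≠ 0) |>.1 heq0
        have e1 : c 1 - a 1 = 0 := by
          have hle1 : (c 1 - a 1)^2 ≤ 0 := by
            nlinarith [sq_nonneg (c 0 - a 0), sq_nonneg (c 2 - a 2)]
          have heq1 : (c 1 - a 1)^2 = 0 := le_antisymm hle1 (sq_nonneg _)
          exact pow_eq_zero_iff (by norm_num : (2:ℕ) ≠ 0) |>.1 heq1
        have e2 : c 2 - a 2 = 0 := by
          have hle2 : (c 2 - a 2)^2 ≤ 0 := by
            nlinarith [sq_nonneg (c 0 - a 0), sq_nonneg (c 1 - a 1)]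
          have heq2 : (c 2 - a 2)^2 = 0 := le_antisymm hle2 (sq_nonneg _)
          exact pow_eq_zero_iff (by norm_num : (2:ℕ) ≠ 0) |>.1 heq2
        funext j
        fin_cases j <;>
          [exact sub_eq_zero.1 e0; exact sub_eq_zero.1 e1; exact sub_eq_zero.1 e2]
      · -- distinct heights, s + t = 1
        rcases lt_or_gt_of_ne hpq with h | h
        · rw [min_eq_left (le_of_lt h), hlc]
          nlinarith [mul_pos htpos (sub_pos.2 h)]
        · rw [min_eq_right (le_of_lt h), hlc]
          nlinarith [mul_pos hspos (sub_pos.2 h)]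
    · -- B > 1
      rcases le_total (∑ i, b i) (∑ i, a i) with h | h
      · have hcs : (∑ i, b i) * B a b ≤ ∑ i, a i := B_CS a b qa qb (by linarith) h
        have := core (∑ i, a i) (∑ i, b i) s t (B a b) hpb h hspos htpos hB key hcs
        rw [min_eq_right h, hlc]
        linarith
      · have hBsymm : B b a = B a b := by rw [B_expand, B_expand]; ring
        have hcs : (∑ i, a i) * B a b ≤ ∑ i, b i := by
          have := B_CS b a qb qa (by linarith) h
          rw [hBsymm] at this
          exact this
        have hk' : t^2 + s^2 + 2*t*s*(B a b) = 1 := by linarith [key]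
        have := core (∑ i, b i) (∑ i, a i) t s (B a b) hpa h htpos hspos hB hk' hcs
        rw [min_eq_left h, hlc]
        linarith
end
end
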